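/- arXiv:1502.00328 — 2 statements merged into one kernel-verified Lean document; each statement's English description precedes it below -/
import Mathlib

section
/- Let F ∈ ℂ[X₁,…,Xₙ]ⁿ be a Keller map and suppose that the set of points a ∈ ℂⁿ with F⁻¹(a) = ∅ contains the zero set of a nonconstant polynomial H ∈ ℂ[X]. Then a contradiction follows; i.e., the non-surjectivity locus E₀ = {a ∈ ℂⁿ : F⁻¹(a) = ∅} cannot contain a hypersurface. -/
open MvPolynomial

namespace Stmt9Aux

variable {n : ℕ}

lemma aeval_eq_eval' {x : Fin n → ℂ} {p : MvPolynomial (Fin n) ℂ} :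
    aeval x p = eval x p := by
  rw [aeval_eq_eval₂Hom, Algebra.algebraMap_self]; rfl

lemma coeff_pderiv (g : MvPolynomial (Fin n) ℂ) (i : Fin n) (m : Fin n →₀ ℕ) :
    coeff m (pderiv i g) = (m i + 1 : ℕ) * coeff (m + Finsupp.single i 1) g := by
  induction g using MvPolynomial.induction_on' with
  | monomial s a =>
    rw [pderiv_monomial, coeff_monomial, coeff_monomial]
    by_cases hs : s = m + Finsupp.single i 1
    · subst hs
      rw [if_pos, if_pos rfl]
      · push_cast [Finsupp.add_apply, Finsupp.single_eq_same]
        ring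
      · rw [add_tsub_cancel_right]
    · rw [if_neg hs, mul_zero]
      by_cases hsm : s - Finsupp.single i 1 = m
      · rw [if_pos hsm]
        have hsi : s i = 0 := by
          by_contra hne
          apply hs
          rw [← hsm, tsub_add_cancel_of_le]
          rwa [Finsupp.single_le_iff, Nat.one_le_iff_ne_zero]
        rw [hsi]; simp
      · rw [if_neg hsm]
  | add p q hp hq => simp [hp, hq, mul_add]

lemma eq_C_of_pderiv_eq_zero {g : MvPolynomial (Fin n) ℂ}
    (h : ∀ i, pderiv i g = 0) : g = C (coeff 0 g) := by
  ext m
  by_cases hm : m = 0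
  · subst hm; simp
  · obtain ⟨i, hi⟩ : ∃ i, m i ≠ 0 := by
      by_contra hc
      push_neg at hc
      exact hm (Finsupp.ext fun i => hc i)
    have hd := coeff_pderiv g i (m - Finsupp.single i 1)
    rw [h i, coeff_zero] at hd
    have hmm : m - Finsupp.single i 1 + Finsupp.single i 1 = m := by
      rw [tsub_add_cancel_of_le]
      rwa [Finsupp.single_le_iff, Nat.one_le_iff_ne_zero]
    rw [hmm] at hd
    have hne : ((((m - Finsupp.single i 1 : Fin n →₀ ℕ) i + 1 : ℕ)) : ℂ) ≠ 0 :=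
      Nat.cast_ne_zero.mpr (Nat.succ_ne_zero _)
    have hz : coeff m g = 0 := by
      rcases mul_eq_zero.mp hd.symm with h' | h'
      · exact absurd h' hne
      · exact h'
    rw [hz, coeff_C, if_neg (Ne.symm hm)]

lemma pderiv_bind₁ (F : Fin n → MvPolynomial (Fin n) ℂ) (g : MvPolynomial (Fin n) ℂ)
    (j : Fin n) :
    pderiv j (bind₁ F g) = ∑ i, bind₁ F (pderiv i g) * pderiv j (F i) := by
  induction g using MvPolynomial.induction_on with
  | C a => simp
  | add p q hp hq => simp [hp, hq, add_mul, Finset.sum_add_distrib]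
  | mul_X p i hp =>
    have hpk : ∀ k, pderiv k (p * X i) = pderiv k p * X i + if k = i then p else 0 := by
      intro k
      rw [pderiv_mul]
      by_cases hk : k = i
      · subst hk; simp
      · simp [pderiv_X_of_ne (Ne.symm hk), hk]
    calc pderiv j (bind₁ F (p * X i))
        = pderiv j (bind₁ F p) * F i + bind₁ F p * pderiv j (F i) := by
          rw [map_mul, bind₁_X_right, pderiv_mul]
      _ = ∑ k, (bind₁ F (pderiv k p) * pderiv j (F k) * F i
            + if k = i then bind₁ F p * pderiv j (F k) else 0) := by
          rw [Finset.sum_add_distrib, ← Finset.sum_mul, ← hp,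
            Finset.sum_ite_eq' Finset.univ i (fun k => bind₁ F p * pderiv j (F k)),
            if_pos (Finset.mem_univ i)]
      _ = ∑ k, bind₁ F (pderiv k (p * X i)) * pderiv j (F k) := by
          refine Finset.sum_congr rfl fun k _ => ?_
          rw [hpk k, map_add, add_mul, apply_ite (bind₁ F), map_zero, ite_mul, zero_mul,
            map_mul, bind₁_X_right]
          ring_nf

lemma bind₁_pderiv_eq_zero (F : Fin n → MvPolynomial (Fin n) ℂ)
    (hK : (Matrix.of fun i j => pderiv j (F i)).det = 1)
    {g : MvPolynomial (Fin n) ℂ} {c : ℂ} (hg : bind₁ F g = C c) (i : Fin n) :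
    bind₁ F (pderiv i g) = 0 := by
  set M : Matrix (Fin n) (Fin n) (MvPolynomial (Fin n) ℂ) :=
    Matrix.of fun i j => pderiv j (F i) with hM
  set v : Fin n → MvPolynomial (Fin n) ℂ := fun i => bind₁ F (pderiv i g) with hv
  have hvM : Matrix.vecMul v M = 0 := by
    funext j
    have h1 := pderiv_bind₁ F g j
    rw [hg, pderiv_C] at h1
    simpa [Matrix.vecMul, dotProduct, hM, hv, mul_comm] using h1.symm
  have hdet : IsUnit M.det := by rw [hK]; exact isUnit_one
  have hv0 : v = 0 := by
    have h1 : Matrix.vecMul v (M * M⁻¹) = v := by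
      rw [Matrix.mul_nonsing_inv M hdet, Matrix.vecMul_one]
    rw [← Matrix.vecMul_vecMul, hvM, Matrix.zero_vecMul] at h1
    exact h1.symm
  exact congrFun hv0 i

lemma totalDegree_pderiv_le (g : MvPolynomial (Fin n) ℂ) (i : Fin n) (d : ℕ)
    (hd : g.totalDegree ≤ d + 1) : (pderiv i g).totalDegree ≤ d := by
  rw [MvPolynomial.totalDegree]
  apply Finset.sup_le
  intro m hm
  have hc : coeff (m + Finsupp.single i 1) g ≠ 0 := by
    intro h
    apply mem_support_iff.mp hm
    rw [coeff_pderiv, h, mul_zero]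
  have hle := MvPolynomial.le_totalDegree (mem_support_iff.mpr hc)
  have hsum : ((m + Finsupp.single i 1).sum fun _ e => e) = (m.sum fun _ e => e) + 1 := by
    rw [Finsupp.sum_add_index' (fun _ => rfl) (fun _ _ _ => rfl),
      Finsupp.sum_single_index rfl]
  omega

lemma bind₁_injective_aux (F : Fin n → MvPolynomial (Fin n) ℂ)
    (hK : (Matrix.of fun i j => pderiv j (F i)).det = 1) :
    ∀ d : ℕ, ∀ g : MvPolynomial (Fin n) ℂ, g.totalDegree ≤ d → bind₁ F g = 0 → g = 0 := by
  intro d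
  induction d with
  | zero =>
    intro g hd hg
    have hgC : g = C (coeff 0 g) := by
      apply eq_C_of_pderiv_eq_zero
      intro i
      ext m
      rw [coeff_pderiv]
      have hz : coeff (m + Finsupp.single i 1) g = 0 := by
        by_contra hc
        have hle := MvPolynomial.le_totalDegree (mem_support_iff.mpr hc)
        simp [Finsupp.sum_add_index] at hle
        omega
      simp [hz]
    rw [hgC] at hg ⊢
    rw [bind₁_C_right] at hg
    have : coeff 0 g = 0 := by simpa using congrArg (coeff 0) hg
    rw [this, map_zero]
  | succ d ih =>
    intro g hd hg
    have hp : ∀ i, pderiv i g = 0 := fun i =>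
      ih _ (totalDegree_pderiv_le g i d hd)
        (bind₁_pderiv_eq_zero F hK (c := 0) (by simpa using hg) i)
    have hgC := eq_C_of_pderiv_eq_zero hp
    rw [hgC] at hg ⊢
    rw [bind₁_C_right] at hg
    have : coeff 0 g = 0 := by simpa using congrArg (coeff 0) hg
    rw [this, map_zero]

/-- A complex multivariate polynomial with no zero is constant. -/
lemma eq_C_of_eval_ne_zero (g : MvPolynomial (Fin n) ℂ)
    (h : ∀ x : Fin n → ℂ, eval x g ≠ 0) : ∃ c : ℂ, g = C c := by
  by_contra hc
  -- g is nonconstant, so its evaluation is nonconstant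
  obtain ⟨a, b, hab⟩ : ∃ a b : Fin n → ℂ, eval a g ≠ eval b g := by
    by_contra hab
    push_neg at hab
    apply hc
    refine ⟨eval (fun _ => 0) g, MvPolynomial.funext fun x => ?_⟩
    rw [eval_C]
    exact hab x _
  set f : Fin n → Polynomial ℂ :=
    fun i => Polynomial.C (a i) + Polynomial.C (b i - a i) * Polynomial.X with hf
  set q : Polynomial ℂ := aeval f g with hq
  have hqe : ∀ t : ℂ, q.eval t = eval (fun i => a i + (b i - a i) * t) g := by
    intro t
    have h2 := AlgHom.congr_fun (MvPolynomial.comp_aeval (f := f) (Polynomial.aeval t)) g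
    simp only [AlgHom.coe_comp, Function.comp_apply] at h2
    rw [hq, show Polynomial.eval t (aeval f g) = Polynomial.aeval t (aeval f g) from rfl, h2]
    have h3 : (fun i => Polynomial.aeval t (f i)) = fun i => a i + (b i - a i) * t := by
      funext i
      simp [hf]
    rw [h3, aeval_eq_eval']
  have hq0 : q.eval 0 = eval a g := by rw [hqe 0]; simp
  have hq1 : q.eval 1 = eval b g := by
    rw [hqe 1, show (fun i => a i + (b i - a i) * 1) = b from funext fun i => by ring]
  have hdeg : q.degree ≠ 0 := by
    intro hdeg
    have := Polynomial.eq_C_of_degree_le_zero hdeg.le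
    apply hab
    rw [← hq0, ← hq1, this]
    simp
  obtain ⟨t, ht⟩ := IsAlgClosed.exists_root q hdeg
  exact h _ (by rw [← hqe t]; exact ht)

end Stmt9Aux

open Stmt9Aux in
/-- The non-surjectivity locus of a Keller map cannot contain the zero set of a nonconstant
polynomial: assuming it does yields a contradiction. -/
theorem stmt_9 (n : ℕ) (F : Fin n → MvPolynomial (Fin n) ℂ)
    (hK : (Matrix.of fun i j => pderiv j (F i)).det = 1)
    (H : MvPolynomial (Fin n) ℂ)
    (hH : ¬ ∃ c : ℂ, H = MvPolynomial.C c)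
    (h0 : ∀ a : Fin n → ℂ, eval a H = 0 → ∀ x : Fin n → ℂ, (fun i => eval x (F i)) ≠ a) :
    False := by
  -- H ∘ F never vanishes
  have hnv : ∀ x : Fin n → ℂ, eval x (bind₁ F H) ≠ 0 := by
    intro x hx
    rw [← aeval_eq_eval', aeval_bind₁] at hx
    have : eval (fun i => eval x (F i)) H = 0 := by
      rw [← hx]
      simp only [aeval_eq_eval']
    exact h0 _ this x rfl
  obtain ⟨c, hc⟩ := eq_C_of_eval_ne_zero (bind₁ F H) hnv
  have hp : ∀ i, pderiv i H = 0 := fun i =>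
    bind₁_injective_aux F hK _ _ le_rfl (bind₁_pderiv_eq_zero F hK hc i)
  exact hH ⟨coeff 0 H, eq_C_of_pderiv_eq_zero hp⟩
end

section
/- Let C be an irreducible affine curve in ℂⁿ defined over ℚ and suppose C ∩ d⁻¹ℤⁿ is infinite for some positive integer d, and let H ∈ ℤ[X] be nonconstant on C. Then for every sequence of points a_k ∈ C ∩ d⁻¹ℤⁿ tending to infinity, |H(a_k)| → ∞. -/
open MvPolynomial Filter

/-- The ideal of polynomials over `ℂ` vanishing on a subset `C ⊆ ℂⁿ`. -/
noncomputable def vanishingIdeal (n : ℕ) (C : Set (Fin n → ℂ)) : Ideal (MvPolynomial (Fin n) ℂ) :=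
  ⨅ x ∈ C, RingHom.ker (eval x)

lemma mem_vanishingIdeal_iff' {n : ℕ} {C : Set (Fin n → ℂ)} {p : MvPolynomial (Fin n) ℂ} :
    p ∈ vanishingIdeal n C ↔ ∀ x ∈ C, eval x p = 0 := by
  rw [show vanishingIdeal n C = ⨅ x ∈ C, RingHom.ker (eval x) from rfl]
  simp [Ideal.mem_iInf, RingHom.mem_ker]

lemma minimalPrimes_finite {R : Type*} [CommRing R] [IsNoetherianRing R] (J : Ideal R) :
    J.minimalPrimes.Finite := by
  rw [Ideal.minimalPrimes_eq_comap]
  exact (minimalPrimes.finite_of_isNoetherianRing _).image _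

/-- A proper algebraic subset of an irreducible affine curve is finite. -/
lemma curve_inter_hypersurface_finite (n : ℕ) (C Z : Set (Fin n → ℂ)) (hZC : Z ⊆ C)
    (hprime : (vanishingIdeal n C).IsPrime)
    (hdim : ringKrullDim (MvPolynomial (Fin n) ℂ ⧸ vanishingIdeal n C) = 1)
    (f : MvPolynomial (Fin n) ℂ) (hfZ : ∀ x ∈ Z, eval x f = 0)
    (hfC : ∃ x ∈ C, eval x f ≠ 0) : Z.Finite := by
  classical
  set I : Ideal (MvPolynomial (Fin n) ℂ) := vanishingIdeal n C with hI
  set J : Ideal (MvPolynomial (Fin n) ℂ) := vanishingIdeal n Z with hJ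
  have hIJ : I ≤ J := by
    intro p hp
    exact mem_vanishingIdeal_iff'.2 fun x hx => mem_vanishingIdeal_iff'.1 hp x (hZC hx)
  have hfJ : f ∈ J := mem_vanishingIdeal_iff'.2 hfZ
  have hfI : f ∉ I := by
    obtain ⟨x, hx, hfx⟩ := hfC
    exact fun h => hfx (mem_vanishingIdeal_iff'.1 h x hx)
  have hsurj : ∀ x : Fin n → ℂ, Function.Surjective (eval x : MvPolynomial (Fin n) ℂ →+* ℂ) :=
    fun x s => ⟨MvPolynomial.C s, by simp⟩
  have hmax : ∀ x : Fin n → ℂ, (RingHom.ker (eval x : MvPolynomial (Fin n) ℂ →+* ℂ)).IsMaximal :=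
    fun x => RingHom.ker_isMaximal_of_surjective _ (hsurj x)
  -- each point of Z gives a minimal prime of J
  have hmem : ∀ x ∈ Z,
      RingHom.ker (eval x : MvPolynomial (Fin n) ℂ →+* ℂ) ∈ J.minimalPrimes := by
    intro x hx
    refine ⟨⟨(hmax x).isPrime, fun p hp =>
      RingHom.mem_ker.2 (mem_vanishingIdeal_iff'.1 hp x hx)⟩, ?_⟩
    rintro Q ⟨hQprime, hJQ⟩ hQle
    by_contra hne
    have hQlt : Q < RingHom.ker (eval x : MvPolynomial (Fin n) ℂ →+* ℂ) :=
      lt_of_le_of_ne hQle (fun h => hne h.ge)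
    have hIQ : I < Q := lt_of_le_of_ne (hIJ.trans hJQ) (fun h => hfI (h ▸ hJQ hfJ))
    haveI := hprime
    haveI : Q.IsPrime := hQprime
    let q : MvPolynomial (Fin n) ℂ →+* MvPolynomial (Fin n) ℂ ⧸ I := Ideal.Quotient.mk I
    have hkerq : RingHom.ker q = I := Ideal.mk_ker
    have hker : RingHom.ker q ≤ Q := by rw [hkerq]; exact hIQ.le
    have hIker : I ≤ RingHom.ker (eval x : MvPolynomial (Fin n) ℂ →+* ℂ) :=
      hIQ.le.trans hQlt.le
    have hker' : RingHom.ker q ≤ RingHom.ker (eval x : MvPolynomial (Fin n) ℂ →+* ℂ) := by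
      rw [hkerq]; exact hIker
    haveI hP1 : (Q.map q).IsPrime :=
      Ideal.map_isPrime_of_surjective Ideal.Quotient.mk_surjective hker
    haveI hP2 : ((RingHom.ker (eval x : MvPolynomial (Fin n) ℂ →+* ℂ)).map q).IsPrime :=
      Ideal.map_isPrime_of_surjective Ideal.Quotient.mk_surjective hker'
    have hcomap : ∀ T : Ideal (MvPolynomial (Fin n) ℂ), I ≤ T → (T.map q).comap q = T := by
      intro T hT
      rw [Ideal.comap_map_of_surjective q Ideal.Quotient.mk_surjective,
        ← RingHom.ker_eq_comap_bot, hkerq, sup_eq_left.2 hT]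
    have h01 : (⊥ : Ideal (MvPolynomial (Fin n) ℂ ⧸ I)) < Q.map q := by
      rw [bot_lt_iff_ne_bot]
      intro hbot
      obtain ⟨g, hgQ, hgI⟩ := SetLike.exists_of_lt hIQ
      have hg : q g ∈ Q.map q := Ideal.mem_map_of_mem q hgQ
      rw [hbot, Ideal.mem_bot] at hg
      exact hgI (Ideal.Quotient.eq_zero_iff_mem.1 hg)
    have h12 : Q.map q < (RingHom.ker (eval x : MvPolynomial (Fin n) ℂ →+* ℂ)).map q := by
      refine lt_of_le_of_ne (Ideal.map_mono hQlt.le) fun h => ?_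
      have h2 := congrArg (Ideal.comap q) h
      rw [hcomap Q hIQ.le, hcomap _ hIker] at h2
      exact hne (le_of_eq h2.symm)
    haveI : IsDomain (MvPolynomial (Fin n) ℂ ⧸ I) := Ideal.Quotient.isDomain I
    let p0 : PrimeSpectrum (MvPolynomial (Fin n) ℂ ⧸ I) := ⟨⊥, Ideal.bot_prime⟩
    let p1 : PrimeSpectrum (MvPolynomial (Fin n) ℂ ⧸ I) := ⟨Q.map q, hP1⟩
    let p2 : PrimeSpectrum (MvPolynomial (Fin n) ℂ ⧸ I) :=
      ⟨(RingHom.ker (eval x : MvPolynomial (Fin n) ℂ →+* ℂ)).map q, hP2⟩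
    have hlt01 : p0 < p1 := by rw [← PrimeSpectrum.asIdeal_lt_asIdeal]; exact h01
    have hlt12 : p1 < p2 := by rw [← PrimeSpectrum.asIdeal_lt_asIdeal]; exact h12
    let s : LTSeries (PrimeSpectrum (MvPolynomial (Fin n) ℂ ⧸ I)) :=
      ((RelSeries.singleton _ p0).snoc p1 (by exact hlt01)).snoc p2
        (by exact hlt12)
    have hle := Order.LTSeries.length_le_krullDim s
    have hlen : s.length = 2 := rfl
    rw [hlen, show Order.krullDim (PrimeSpectrum (MvPolynomial (Fin n) ℂ ⧸ I))
      = ringKrullDim (MvPolynomial (Fin n) ℂ ⧸ I) from rfl, hdim] at hle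
    norm_num at hle
  -- the map x ↦ ker (eval x) is injective on Z
  have hinj : Set.InjOn
      (fun x : Fin n → ℂ => RingHom.ker (eval x : MvPolynomial (Fin n) ℂ →+* ℂ)) Z := by
    intro x hx y hy hxy
    funext j
    have h1 : (X j - MvPolynomial.C (x j) : MvPolynomial (Fin n) ℂ)
        ∈ RingHom.ker (eval x : MvPolynomial (Fin n) ℂ →+* ℂ) := by
      simp [RingHom.mem_ker]
    have hxy' : RingHom.ker (eval x : MvPolynomial (Fin n) ℂ →+* ℂ)
        = RingHom.ker (eval y : MvPolynomial (Fin n) ℂ →+* ℂ) := hxy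
    rw [hxy'] at h1
    have h2 := RingHom.mem_ker.1 h1
    simp [sub_eq_zero] at h2
    exact h2.symm
  exact Set.Finite.of_finite_image
    ((minimalPrimes_finite J).subset (by rintro _ ⟨x, hx, rfl⟩; exact hmem x hx)) hinj

/-- Let `C ⊆ ℂⁿ` be an irreducible affine curve over `ℚ` with `C ∩ d⁻¹ℤⁿ` infinite, and let
`H ∈ ℤ[X]` be nonconstant on `C`.  Then along any sequence of points of `C ∩ d⁻¹ℤⁿ` tending to
infinity, `|H| → ∞`. -/
theorem stmt_17 (n : ℕ) (C : Set (Fin n → ℂ))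
    (S : Set (MvPolynomial (Fin n) ℚ))
    (hQ : C = {x | ∀ p ∈ S, aeval x p = 0})
    (hne : C.Nonempty)
    (hirr : (vanishingIdeal n C).IsPrime)
    (hcurve : ringKrullDim (MvPolynomial (Fin n) ℂ ⧸ vanishingIdeal n C) = 1)
    (d : ℕ) (hd : 0 < d)
    (hinf : {x ∈ C | ∀ j, ∃ z : ℤ, x j = (z : ℂ) / d}.Infinite)
    (H : MvPolynomial (Fin n) ℤ)
    (hnc : ¬ ∃ c : ℂ, ∀ x ∈ C, aeval x H = c)
    (a : ℕ → (Fin n → ℂ))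
    (ha : ∀ k, a k ∈ C ∧ ∀ j, ∃ z : ℤ, a k j = (z : ℂ) / d)
    (htendsto : Tendsto (fun k => ‖a k‖) atTop atTop) :
    Tendsto (fun k => ‖aeval (a k) H‖) atTop atTop := by
  classical
  by_contra hT
  set N := H.totalDegree with hN
  have hdR : (0:ℝ) < (d:ℝ) := by exact_mod_cast hd
  have hdC : (d:ℂ) ≠ 0 := Nat.cast_ne_zero.2 hd.ne'
  have hdNC : ((d:ℂ))^N ≠ 0 := pow_ne_zero _ hdC
  -- Step A : d^N * H(a k) is an integer
  have key : ∀ k, ∃ m : ℤ, (m:ℂ) = ((d:ℂ))^N * aeval (a k) H := by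
    intro k
    rw [← Subring.mem_bot (R := ℂ)]
    have hrw : aeval (a k) H
        = ∑ e ∈ H.support, (algebraMap ℤ ℂ) (coeff e H) * ∏ j, (a k j) ^ e j := by
      rw [aeval_def, eval₂_eq']
    rw [hrw, Finset.mul_sum]
    refine Subring.sum_mem _ fun e he => ?_
    have hs : (∑ j, e j) ≤ N := by
      have h1 := MvPolynomial.le_totalDegree he
      rwa [Finsupp.sum_fintype _ _ (fun _ => rfl)] at h1
    have hprod : ((d:ℂ))^N * ((algebraMap ℤ ℂ) (coeff e H) * ∏ j, (a k j) ^ e j)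
        = (algebraMap ℤ ℂ) (coeff e H)
          * (((d:ℂ))^(N - ∑ j, e j) * ∏ j, ((d:ℂ) * a k j) ^ e j) := by
      have h2 : ∏ j, ((d:ℂ) * a k j) ^ e j
          = ((d:ℂ))^(∑ j, e j) * ∏ j, (a k j) ^ e j := by
        simp [mul_pow, Finset.prod_mul_distrib, Finset.prod_pow_eq_pow_sum]
      rw [h2, show ((d:ℂ))^N = ((d:ℂ))^(N - ∑ j, e j) * ((d:ℂ))^(∑ j, e j) by
        rw [← pow_add, Nat.sub_add_cancel hs]]
      ring
    rw [hprod]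
    refine Subring.mul_mem _ (Subring.mem_bot.2 ⟨coeff e H, by simp⟩)
      (Subring.mul_mem _ (pow_mem (Subring.mem_bot.2 ⟨(d:ℤ), by simp⟩) _) ?_)
    refine Subring.prod_mem _ fun j _ => pow_mem ?_ _
    obtain ⟨z, hz⟩ := (ha k).2 j
    rw [hz, show (d:ℂ) * ((z:ℂ)/(d:ℂ)) = (z:ℂ) by field_simp]
    exact Subring.mem_bot.2 ⟨z, rfl⟩
  choose m hm using key
  -- Step B : a bound along a subsequence
  have hMex : ∃ M : ℝ, ∃ᶠ k in atTop, ‖aeval (a k) H‖ < M := by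
    by_contra h
    push_neg at h
    apply hT
    rw [tendsto_atTop]
    intro b
    have hb := h b
    exact hb
  obtain ⟨M, hM⟩ := hMex
  set K : Set ℕ := {k | ‖aeval (a k) H‖ < M} with hK
  have hKinf : K.Infinite := Nat.frequently_atTop_iff_infinite.1 hM
  set B : ℤ := ⌈(d:ℝ)^N * M⌉ with hB
  have hbound : ∀ k ∈ K, m k ∈ Finset.Icc (-B) B := by
    intro k hk
    have h1 : |(m k : ℝ)| ≤ (B:ℝ) := by
      have h2 : ‖((m k : ℂ))‖ = (d:ℝ)^N * ‖aeval (a k) H‖ := by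
        rw [hm k]
        simp [norm_mul, norm_pow, Complex.norm_natCast]
      have h3 : (d:ℝ)^N * ‖aeval (a k) H‖ ≤ (d:ℝ)^N * M :=
        mul_le_mul_of_nonneg_left (le_of_lt hk) (by positivity)
      calc |(m k : ℝ)| = ‖((m k : ℂ))‖ := by
            rw [Complex.norm_intCast]
        _ ≤ (d:ℝ)^N * M := h2 ▸ h3
        _ ≤ (B:ℝ) := Int.le_ceil _
    rw [Finset.mem_Icc]
    constructor
    · exact_mod_cast neg_le_of_abs_le h1
    · exact_mod_cast le_of_abs_le h1
  have hfiber : ∃ m0 ∈ Finset.Icc (-B) B, {k ∈ K | m k = m0}.Infinite := by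
    by_contra h
    push_neg at h
    apply hKinf
    refine Set.Finite.subset (Set.Finite.biUnion (Finset.Icc (-B) B).finite_toSet
      (fun m0 hm0 => h m0 hm0)) ?_
    intro k hk
    exact Set.mem_biUnion (hbound k hk) ⟨hk, rfl⟩
  obtain ⟨m0, _, hK0⟩ := hfiber
  set K0 : Set ℕ := {k ∈ K | m k = m0} with hK0def
  set c : ℂ := (m0:ℂ) / ((d:ℂ))^N with hc
  set f : MvPolynomial (Fin n) ℂ := map (Int.castRingHom ℂ) H - MvPolynomial.C c with hf
  have heval : ∀ x : Fin n → ℂ, eval x f = aeval x H - c := by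
    intro x
    rw [hf]
    rw [map_sub, MvPolynomial.eval_map, MvPolynomial.eval_C, aeval_def]
    rfl
  set Z : Set (Fin n → ℂ) := a '' K0 with hZ
  have hZC : Z ⊆ C := by rintro _ ⟨k, _, rfl⟩; exact (ha k).1
  have hfZ : ∀ x ∈ Z, eval x f = 0 := by
    rintro _ ⟨k, hk, rfl⟩
    rw [heval]
    have h1 : aeval (a k) H = c := by
      rw [hc, eq_div_iff hdNC, mul_comm, ← hm k, hk.2]
    rw [h1, sub_self]
  have hfC : ∃ x ∈ C, eval x f ≠ 0 := by
    push_neg at hnc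
    obtain ⟨x, hxC, hxne⟩ := hnc c
    exact ⟨x, hxC, by rw [heval]; exact sub_ne_zero.2 hxne⟩
  have hZfin : Z.Finite :=
    curve_inter_hypersurface_finite n C Z hZC hirr hcurve f hfZ hfC
  -- but Z must be infinite
  obtain ⟨R0, hR0⟩ : ∃ R0 : ℝ, ∀ x ∈ Z, ‖x‖ ≤ R0 := by
    rcases (hZfin.image (fun x => ‖x‖)).bddAbove with ⟨R0, hR0⟩
    exact ⟨R0, fun x hx => hR0 (Set.mem_image_of_mem _ hx)⟩
  obtain ⟨k1, hk1⟩ := (tendsto_atTop.1 htendsto (R0 + 1)).exists_forall_of_atTop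
  refine hK0 (Set.Finite.subset (Set.finite_Iio k1) ?_)
  intro k hk
  by_contra hklt
  have hge : k1 ≤ k := not_lt.1 hklt
  have h1 : ‖a k‖ ≤ R0 := hR0 _ (Set.mem_image_of_mem _ hk)
  have h2 : R0 + 1 ≤ ‖a k‖ := hk1 k hge
  linarith
end
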